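/- Let R be a commutative unital ring that is reduced or indecomposable, and let p ∈ R[x]. If some logical power of p is a multiple of its own square, then p is a unit. Consequently, if p is a logical power of itself, then p is a unit or irreducible. -/

import Mathlib

def IsLogPow {S : Type*} [CommRing S] (p f : S) : Prop :=
  p ∣ f ∧ (p - 1) ∣ (f - 1) ∧ ∀ g : S, g ∣ f → IsUnit g ∨ p ∣ g

open Polynomial

/-- An idempotent polynomial over a commutative ring is a constant. -/
private lemma idem_eq_C {R : Type*} [CommRing R] {e : R[X]} (he : e * e = e) :
    e = C (e.coeff 0) := by
  have hc : e.coeff 0 * e.coeff 0 = e.coeff 0 := by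
    have := congrArg (fun q => Polynomial.coeff q 0) he
    simpa [Polynomial.mul_coeff_zero] using this
  ext n
  induction n using Nat.strong_induction_on with
  | _ n ih =>
    match n with
    | 0 => simp
    | n + 1 =>
      rw [coeff_C, if_neg (Nat.succ_ne_zero n)]
      set c := e.coeff 0 with hcdef
      set t := e.coeff (n + 1) with htdef
      have hsum : t = ∑ x ∈ Finset.HasAntidiagonal.antidiagonal (n + 1), e.coeff x.1 * e.coeff x.2 := by
        conv_lhs => rw [htdef, ← he]
        exact Polynomial.coeff_mul e e (n + 1)
      have hS : ({(0, n + 1), (n + 1, 0)} : Finset (ℕ × ℕ)) ⊆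
          Finset.HasAntidiagonal.antidiagonal (n + 1) := by
        intro x hx
        simp only [Finset.mem_insert, Finset.mem_singleton] at hx
        rcases hx with rfl | rfl <;> simp [Finset.mem_antidiagonal]
      have hzero : ∀ x ∈ Finset.HasAntidiagonal.antidiagonal (n + 1),
          x ∉ ({(0, n + 1), (n + 1, 0)} : Finset (ℕ × ℕ)) →
          e.coeff x.1 * e.coeff x.2 = 0 := by
        intro x hx hxs
        rw [Finset.HasAntidiagonal.mem_antidiagonal] at hx
        simp only [Finset.mem_insert, Finset.mem_singleton] at hxs
        push_neg at hxs
        obtain ⟨h1, h2⟩ := hxs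
        have hx1 : x.1 ≠ 0 := by
          intro h
          apply h1
          have : x.2 = n + 1 := by omega
          exact Prod.ext h this
        have hx2 : x.2 ≠ 0 := by
          intro h
          apply h2
          have : x.1 = n + 1 := by omega
          exact Prod.ext this h
        have hlt : x.1 < n + 1 := by omega
        have := ih x.1 hlt
        rw [coeff_C, if_neg hx1] at this
        rw [this, zero_mul]
      have hsum2 : ∑ x ∈ Finset.HasAntidiagonal.antidiagonal (n + 1), e.coeff x.1 * e.coeff x.2 =
          ∑ x ∈ ({(0, n + 1), (n + 1, 0)} : Finset (ℕ × ℕ)), e.coeff x.1 * e.coeff x.2 :=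
        (Finset.sum_subset hS hzero).symm
      have hpair : ∑ x ∈ ({(0, n + 1), (n + 1, 0)} : Finset (ℕ × ℕ)),
          e.coeff x.1 * e.coeff x.2 = c * t + t * c := by
        rw [Finset.sum_pair (by simp : ((0 : ℕ), n + 1) ≠ (n + 1, 0))]
      have h1 : t = c * t + t * c := hsum.trans (hsum2.trans hpair)
      have hct : c * t = 0 := by linear_combination (-c) * h1 + (-2 * t) * hc
      linear_combination h1 + 2 * hct

open Polynomial in
theorem stmt_17 {R : Type*} [CommRing R] [Nontrivial R]
    (hR : IsReduced R ∨ ∀ e : R, IsIdempotentElem e → e = 0 ∨ e = 1)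
    (p : R[X]) :
    ((∃ f : R[X], IsLogPow p f ∧ f ^ 2 ∣ f) → IsUnit p) ∧
      (IsLogPow p p → IsUnit p ∨ Irreducible p) := by
  have main : (∃ f : R[X], IsLogPow p f ∧ f ^ 2 ∣ f) → IsUnit p := by
    rintro ⟨f, ⟨hpf, hp1, hdiv⟩, hsq⟩
    obtain ⟨g, hg⟩ := hsq
    set e := f * g with hedef
    have hee : e * e = e := by
      show f * g * (f * g) = f * g
      linear_combination (-g) * hg
    have hef : e * f = f := by
      show f * g * f = f
      linear_combination -hg
    have hdvd : ∀ b : R[X], (e + (1 - e) * b) ∣ f := by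
      intro b
      refine ⟨f, ?_⟩
      linear_combination (b - 1) * hef
    rcases hdiv e ⟨f, hef.symm⟩ with heu | hpe
    · -- e is a unit, hence e = 1, hence f is a unit, hence p is a unit
      have he1 : e = 1 := heu.mul_left_cancel (by rw [hee, mul_one])
      have hfu : IsUnit f := IsUnit.of_mul_eq_one (a := f) g he1
      exact isUnit_of_dvd_unit hpf hfu
    · -- p ∣ e
      have hcc : e.coeff 0 * e.coeff 0 = e.coeff 0 := by
        have := congrArg (fun q => Polynomial.coeff q 0) hee
        simpa [Polynomial.mul_coeff_zero] using this
      set c := e.coeff 0 with hcdef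
      have heC : e = C c := idem_eq_C hee
      -- if 1 - c is nilpotent then c = 1 and we are done
      have key : IsNilpotent (1 - c) → IsUnit p := by
        rintro ⟨n, hn⟩
        have hid : (1 - c) * (1 - c) = 1 - c := by linear_combination hcc
        have hpow : ∀ m : ℕ, (1 - c) ^ (m + 1) = 1 - c := by
          intro m
          induction m with
          | zero => rw [pow_one]
          | succ k ihk => rw [pow_succ, ihk, hid]
        have hc1 : (1 : R) - c = 0 := by
          cases n with
          | zero =>
            rw [pow_zero] at hn
            exact absurd hn one_ne_zero
          | succ m => rw [hpow m] at hn; exact hn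
        have he1 : e = 1 := by
          rw [heC]
          have : c = 1 := by linear_combination -hc1
          rw [this, map_one]
        rw [he1] at hpe
        exact isUnit_of_dvd_one hpe
      rcases hdiv _ (hdvd X) with h1u | h1d
      · -- e + (1-e) * X is a unit
        apply key
        have := (Polynomial.isUnit_iff_coeff_isUnit_isNilpotent.mp h1u).2 1 one_ne_zero
        have hco : (e + (1 - e) * X).coeff 1 = 1 - c := by
          rw [heC]
          simp [coeff_C, Polynomial.coeff_mul_X]
        rwa [hco] at this
      rcases hdiv _ (hdvd (1 + X)) with h2u | h2d
      · -- e + (1-e) * (1 + X) is a unit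
        apply key
        have := (Polynomial.isUnit_iff_coeff_isUnit_isNilpotent.mp h2u).2 1 one_ne_zero
        have hco : (e + (1 - e) * (1 + X)).coeff 1 = 1 - c := by
          rw [heC]
          have h5 : C c + (1 - C c) * (1 + X) = 1 + (1 - C c) * X := by ring
          rw [h5]
          simp [Polynomial.coeff_one, Polynomial.coeff_mul_X, coeff_C]
        rwa [hco] at this
      · -- p divides both special divisors, hence p ∣ 1
        have hd : p ∣ (1 : R[X]) := by
          have h3 : p ∣ (e + (1 - e) * (1 + X)) - (e + (1 - e) * X) := dvd_sub h2d h1d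
          have h4 : (e + (1 - e) * (1 + X)) - (e + (1 - e) * X) = 1 - e := by ring
          rw [h4] at h3
          have := dvd_add h3 hpe
          simpa using this
        exact isUnit_of_dvd_one hd
  refine ⟨main, ?_⟩
  intro hlog
  by_cases hu : IsUnit p
  · exact Or.inl hu
  · refine Or.inr ⟨hu, ?_⟩
    intro a b hab
    rcases hlog.2.2 a ⟨b, hab⟩ with hau | hpa
    · exact Or.inl hau
    rcases hlog.2.2 b ⟨a, by rw [hab, mul_comm]⟩ with hbu | hpb
    · exact Or.inr hbu
    · exfalso
      obtain ⟨s, hs⟩ := hpa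
      obtain ⟨t, ht⟩ := hpb
      have hsq : p ^ 2 ∣ p := ⟨s * t, by linear_combination hab + b * hs + p * s * ht⟩
      exact hu (main ⟨p, hlog, hsq⟩)
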